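/- Let X_1,...,X_m and W_1,...,W_N be i.i.d. Rademacher variables and 0 < x < 1. With A = (1−x)/(1+x), E[∏_{i,j} (1 + x X_i W_j)] = (1 − x²)^{mN/2} · E_Q[ ((1/2)A^{Q−N/2} + (1/2)A^{N/2−Q})^m ] where Q ∼ Binomial(N, 1/2). -/

import Mathlib

open MeasureTheory ProbabilityTheory Finset

lemma count_fiber (N q : ℕ) :
    (Finset.univ.filter (fun δ : Fin N → Bool =>
      (Finset.univ.filter (fun j => δ j = true)).card = q)).card = N.choose q := by
  rw [show N.choose q = ((Finset.univ : Finset (Fin N)).powersetCard q).card by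
    rw [Finset.card_powersetCard, Finset.card_fin]]
  refine Finset.card_bij' (fun δ _ => Finset.univ.filter (fun j => δ j = true))
    (fun s _ => fun j => j ∈ s) ?_ ?_ ?_ ?_
  · intro δ hδ
    simp only [Finset.mem_filter, Finset.mem_univ, true_and] at hδ
    simp [Finset.mem_powersetCard, hδ]
  · intro s hs
    simp only [Finset.mem_powersetCard] at hs
    simp only [Finset.mem_filter, Finset.mem_univ, true_and]
    rw [← hs.2]; congr 1; ext j; simp
  · intro δ _; ext j; simp
  · intro s _; ext j; simp

lemma prod_bool_pow (N : ℕ) (δ : Fin N → Bool) (a b : ℝ) :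
    (∏ j, (if δ j then a else b))
      = a ^ (Finset.univ.filter (fun j => δ j = true)).card
        * b ^ (N - (Finset.univ.filter (fun j => δ j = true)).card) := by
  have hc : (Finset.univ.filter (fun j => ¬ δ j = true)).card
      = N - (Finset.univ.filter (fun j => δ j = true)).card := by
    have := Finset.card_filter_add_card_filter_not
      (s := (Finset.univ : Finset (Fin N))) (p := fun j => δ j = true)
    simp only [Finset.card_fin] at this
    omega
  rw [Finset.prod_ite, Finset.prod_const, Finset.prod_const, hc]

lemma integral_of_fibers {Ω : Type*} [MeasurableSpace Ω] (μ : Measure Ω)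
    [IsProbabilityMeasure μ] {κ : Type*} [Fintype κ] (T : κ → Set Ω)
    (hT : ∀ p, MeasurableSet (T p)) (f : Ω → ℝ) (v : κ → ℝ)
    (hae : ∀ᵐ ω ∂μ, f ω = ∑ p, (T p).indicator (fun _ => v p) ω) :
    ∫ ω, f ω ∂μ = ∑ p, v p * (μ (T p)).toReal := by
  rw [integral_congr_ae hae, integral_finset_sum _
    (fun p _ => (integrable_const (v p)).indicator (hT p))]
  refine Finset.sum_congr rfl fun p _ => ?_
  rw [integral_indicator_const _ (hT p)]
  simp [mul_comm, measureReal_def]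

lemma rpow_key {x : ℝ} (hx0 : 0 < x) (hx1 : x < 1) (N q : ℕ) (hq : q ≤ N) :
    (1 - x ^ 2) ^ ((N : ℝ) / 2) * ((1 - x) / (1 + x)) ^ ((N : ℝ) / 2 - (q : ℝ))
      = (1 + x) ^ q * (1 - x) ^ (N - q) := by
  have hp : (0:ℝ) < 1 + x := by linarith
  have hn : (0:ℝ) < 1 - x := by linarith
  have h2 : (1:ℝ) - x ^ 2 = (1 + x) * (1 - x) := by ring
  rw [h2, Real.mul_rpow hp.le hn.le, Real.div_rpow hn.le hp.le]
  rw [← Real.rpow_natCast (1+x) q, ← Real.rpow_natCast (1-x) (N-q),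
    Nat.cast_sub hq]
  rw [show (1+x) ^ ((N:ℝ)/2) * (1-x) ^ ((N:ℝ)/2) *
      ((1-x) ^ ((N:ℝ)/2 - q) / (1+x) ^ ((N:ℝ)/2 - q))
    = ((1+x) ^ ((N:ℝ)/2) / (1+x) ^ ((N:ℝ)/2 - q)) *
      ((1-x) ^ ((N:ℝ)/2) * (1-x) ^ ((N:ℝ)/2 - q)) by ring]
  rw [← Real.rpow_sub hp, ← Real.rpow_add hn,
    show (N:ℝ)/2 - ((N:ℝ)/2 - q) = (q:ℝ) by ring,
    show (N:ℝ)/2 + ((N:ℝ)/2 - q) = (N:ℝ) - q by ring]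

lemma rpow_key' {x : ℝ} (hx0 : 0 < x) (hx1 : x < 1) (N q : ℕ) (hq : q ≤ N) :
    (1 - x ^ 2) ^ ((N : ℝ) / 2) * ((1 - x) / (1 + x)) ^ ((q : ℝ) - (N : ℝ) / 2)
      = (1 - x) ^ q * (1 + x) ^ (N - q) := by
  have h := rpow_key hx0 hx1 N (N - q) (Nat.sub_le N q)
  rw [Nat.cast_sub hq, Nat.sub_sub_self hq] at h
  rw [show (q:ℝ) - (N:ℝ)/2 = (N:ℝ)/2 - ((N:ℝ) - q) by ring, h, mul_comm]

lemma sum_pi_bool (m : ℕ) (h : Bool → ℝ) :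
    (∑ ε : Fin m → Bool, ∏ i, h (ε i)) = (h true + h false) ^ m := by
  classical
  calc (∑ ε : Fin m → Bool, ∏ i, h (ε i))
      = ∑ ε ∈ Fintype.piFinset (fun _ : Fin m => (Finset.univ : Finset Bool)),
          ∏ i, h (ε i) := by rw [Fintype.piFinset_univ]
    _ = ∏ _i : Fin m, ∑ b : Bool, h b := (Finset.prod_univ_sum _ (fun _ b => h b)).symm
    _ = (h true + h false) ^ m := by
        rw [Finset.prod_const, Finset.card_univ, Fintype.card_fin, Fintype.sum_bool]

set_option maxHeartbeats 2000000 in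
/-- Closed-form reduction of the Rademacher product expectation to a binomial
average, with `A = (1-x)/(1+x)`. -/
theorem stmt_4
    {Ω Ω' : Type*} [MeasurableSpace Ω] [MeasurableSpace Ω']
    (μ : Measure Ω) (μ' : Measure Ω')
    [IsProbabilityMeasure μ] [IsProbabilityMeasure μ']
    (m N : ℕ) (x : ℝ) (hx0 : 0 < x) (hx1 : x < 1)
    (X : Fin m → Ω → ℝ) (W : Fin N → Ω → ℝ)
    (hmX : ∀ i, Measurable (X i)) (hmW : ∀ j, Measurable (W j))
    (hindep : iIndepFun (Sum.elim X W) μ)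
    (hRadX : ∀ i, μ {ω | X i ω = 1} = 1/2 ∧ μ {ω | X i ω = -1} = 1/2)
    (hRadW : ∀ j, μ {ω | W j ω = 1} = 1/2 ∧ μ {ω | W j ω = -1} = 1/2)
    (Q : Ω' → ℕ) (hmQ : Measurable Q)
    (hQ : ∀ j : ℕ, μ' {ω | Q ω = j}
        = ENNReal.ofReal ((N.choose j : ℝ) * (1 / 2 : ℝ) ^ N))
    (A : ℝ) (hA : A = (1 - x) / (1 + x)) :
    ∫ ω, ∏ i, ∏ j, (1 + x * X i ω * W j ω) ∂μ
      = (1 - x ^ 2) ^ ((m * N : ℝ) / 2)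
        * ∫ ω', ((1 / 2) * A ^ ((Q ω' : ℝ) - (N : ℝ) / 2)
            + (1 / 2) * A ^ ((N : ℝ) / 2 - (Q ω' : ℝ))) ^ m ∂μ' := by
  classical
  set e : Bool → ℝ := fun b => if b then 1 else -1 with he
  set c : (Fin N → Bool) → ℕ :=
    fun δ => (Finset.univ.filter (fun j => δ j = true)).card with hc
  -- fibers for the LHS
  set T : (Fin m → Bool) × (Fin N → Bool) → Set Ω := fun p =>
    {ω | (∀ i, X i ω = e (p.1 i)) ∧ (∀ j, W j ω = e (p.2 j))} with hT
  have hTmeas : ∀ p, MeasurableSet (T p) := by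
    intro p
    have : T p = (⋂ i, X i ⁻¹' {e (p.1 i)}) ∩ ⋂ j, W j ⁻¹' {e (p.2 j)} := by
      ext ω; simp [hT, Set.mem_iInter]
    rw [this]
    exact (MeasurableSet.iInter fun i => hmX i (measurableSet_singleton _)).inter
      (MeasurableSet.iInter fun j => hmW j (measurableSet_singleton _))
  -- measure of fibers via independence
  have hμT : ∀ p, μ (T p) = (1/2 : ENNReal) ^ (m + N) := by
    intro p
    have key := hindep.measure_inter_preimage_eq_mul (S := Finset.univ)
      (sets := fun k => {Sum.elim (fun i => e (p.1 i)) (fun j => e (p.2 j)) k})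
      (fun k _ => measurableSet_singleton _)
    have hset : (⋂ k ∈ Finset.univ, Sum.elim X W k ⁻¹'
          {Sum.elim (fun i => e (p.1 i)) (fun j => e (p.2 j)) k}) = T p := by
      ext ω
      simp [hT, Set.mem_iInter, Sum.forall]
    rw [hset] at key
    rw [key, Fintype.prod_sum_type]
    have hX : ∀ i, μ (Sum.elim X W (Sum.inl i) ⁻¹'
        {Sum.elim (fun i => e (p.1 i)) (fun j => e (p.2 j)) (Sum.inl i)}) = 1/2 := by
      intro i
      have : Sum.elim X W (Sum.inl i) ⁻¹' {Sum.elim (fun i => e (p.1 i))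
          (fun j => e (p.2 j)) (Sum.inl i)} = {ω | X i ω = e (p.1 i)} := by
        ext ω; simp
      rw [this]
      cases hb : p.1 i <;> simp [he, (hRadX i).1, (hRadX i).2]
    have hW : ∀ j, μ (Sum.elim X W (Sum.inr j) ⁻¹'
        {Sum.elim (fun i => e (p.1 i)) (fun j => e (p.2 j)) (Sum.inr j)}) = 1/2 := by
      intro j
      have : Sum.elim X W (Sum.inr j) ⁻¹' {Sum.elim (fun i => e (p.1 i))
          (fun j => e (p.2 j)) (Sum.inr j)} = {ω | W j ω = e (p.2 j)} := by
        ext ω; simp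
      rw [this]
      cases hb : p.2 j <;> simp [he, (hRadW j).1, (hRadW j).2]
    simp only [hX, hW, Finset.prod_const, Finset.card_univ, Fintype.card_fin]
    rw [pow_add]
  -- a.e., every X i and W j takes values in {1, -1}
  have hgoodX : ∀ i, ∀ᵐ ω ∂μ, X i ω = 1 ∨ X i ω = -1 := by
    intro i
    have hm1 : MeasurableSet {ω | X i ω = 1} := hmX i (measurableSet_singleton _)
    have hm2 : MeasurableSet {ω | X i ω = -1} := hmX i (measurableSet_singleton _)
    have hd : Disjoint {ω | X i ω = 1} {ω | X i ω = -1} := by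
      rw [Set.disjoint_left]; intro ω h1 h2
      simp only [Set.mem_setOf_eq] at h1 h2
      rw [h1] at h2; norm_num at h2
    have hu : μ ({ω | X i ω = 1} ∪ {ω | X i ω = -1}) = 1 := by
      rw [measure_union hd hm2, (hRadX i).1, (hRadX i).2]
      rw [ENNReal.div_add_div_same, show (1+1 : ENNReal) = 2 by norm_num]
      exact ENNReal.div_self (by norm_num) (by norm_num)
    have := prob_compl_eq_zero_iff (μ := μ) (hm1.union hm2) |>.2 hu
    filter_upwards [MeasureTheory.measure_eq_zero_iff_ae_notMem.1 this] with ω hω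
    have hmem := Set.notMem_compl_iff.1 hω
    simpa [Set.mem_union] using hmem
  have hgoodW : ∀ j, ∀ᵐ ω ∂μ, W j ω = 1 ∨ W j ω = -1 := by
    intro j
    have hm1 : MeasurableSet {ω | W j ω = 1} := hmW j (measurableSet_singleton _)
    have hm2 : MeasurableSet {ω | W j ω = -1} := hmW j (measurableSet_singleton _)
    have hd : Disjoint {ω | W j ω = 1} {ω | W j ω = -1} := by
      rw [Set.disjoint_left]; intro ω h1 h2
      simp only [Set.mem_setOf_eq] at h1 h2
      rw [h1] at h2; norm_num at h2
    have hu : μ ({ω | W j ω = 1} ∪ {ω | W j ω = -1}) = 1 := by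
      rw [measure_union hd hm2, (hRadW j).1, (hRadW j).2]
      rw [ENNReal.div_add_div_same, show (1+1 : ENNReal) = 2 by norm_num]
      exact ENNReal.div_self (by norm_num) (by norm_num)
    have := prob_compl_eq_zero_iff (μ := μ) (hm1.union hm2) |>.2 hu
    filter_upwards [MeasureTheory.measure_eq_zero_iff_ae_notMem.1 this] with ω hω
    have hmem := Set.notMem_compl_iff.1 hω
    simpa [Set.mem_union] using hmem
  -- pointwise decomposition on the good set
  have hae : ∀ᵐ ω ∂μ, (∏ i, ∏ j, (1 + x * X i ω * W j ω))
      = ∑ p : (Fin m → Bool) × (Fin N → Bool),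
          (T p).indicator (fun _ => ∏ i, ∏ j, (1 + x * e (p.1 i) * e (p.2 j))) ω := by
    filter_upwards [(ae_all_iff).2 hgoodX, (ae_all_iff).2 hgoodW] with ω hX hW
    set p₀ : (Fin m → Bool) × (Fin N → Bool) :=
      (fun i => if X i ω = 1 then true else false,
       fun j => if W j ω = 1 then true else false) with hp₀
    have hXe : ∀ i, X i ω = e (p₀.1 i) := by
      intro i
      rcases hX i with h | h
      · simp [hp₀, he, h]
      · have hne : X i ω ≠ 1 := by rw [h]; norm_num
        simp only [hp₀, he, if_neg hne]
        simpa using h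
    have hWe : ∀ j, W j ω = e (p₀.2 j) := by
      intro j
      rcases hW j with h | h
      · simp [hp₀, he, h]
      · have hne : W j ω ≠ 1 := by rw [h]; norm_num
        simp only [hp₀, he, if_neg hne]
        simpa using h
    rw [Finset.sum_eq_single p₀]
    · have hmem : ω ∈ T p₀ := ⟨hXe, hWe⟩
      rw [Set.indicator_of_mem hmem]
      refine Finset.prod_congr rfl fun i _ => Finset.prod_congr rfl fun j _ => ?_
      rw [hXe i, hWe j]
    · intro p _ hp
      rw [Set.indicator_of_notMem]
      intro hmem
      apply hp
      obtain ⟨h1, h2⟩ := hmem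
      have he1 : ∀ b b' : Bool, e b = e b' → b = b' := by
        intro b b'; cases b <;> cases b' <;> simp [he] <;> norm_num
      ext i
      · exact he1 _ _ ((h1 i).symm.trans (hXe i))
      · exact he1 _ _ ((h2 i).symm.trans (hWe i))
    · intro h; exact absurd (Finset.mem_univ p₀) h
  -- LHS as a finite sum
  have hLHS : ∫ ω, ∏ i, ∏ j, (1 + x * X i ω * W j ω) ∂μ
      = ∑ p : (Fin m → Bool) × (Fin N → Bool),
          (∏ i, ∏ j, (1 + x * e (p.1 i) * e (p.2 j))) * ((1:ℝ)/2) ^ (m + N) := by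
    rw [integral_of_fibers μ T hTmeas _ _ hae]
    refine Finset.sum_congr rfl fun p _ => ?_
    rw [hμT p]
    congr 1
    rw [ENNReal.toReal_pow]
    norm_num
  -- fibers for the RHS
  set g : ℕ → ℝ := fun q => ((1/2) * A ^ ((q : ℝ) - (N : ℝ)/2)
      + (1/2) * A ^ ((N : ℝ)/2 - (q : ℝ))) ^ m with hg
  have haeQ : ∀ᵐ ω' ∂μ', Q ω' ≤ N := by
    have hsub : {ω' | ¬ Q ω' ≤ N} ⊆ ⋃ j : ℕ, {ω' | Q ω' = j + (N + 1)} := by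
      intro ω' h
      simp only [Set.mem_setOf_eq, not_le] at h
      exact Set.mem_iUnion.2 ⟨Q ω' - (N + 1), by simp only [Set.mem_setOf_eq]; omega⟩
    have h0 : μ' (⋃ j : ℕ, {ω' | Q ω' = j + (N + 1)}) = 0 := by
      refine measure_iUnion_null fun j => ?_
      rw [hQ (j + (N + 1))]
      rw [Nat.choose_eq_zero_of_lt (by omega)]
      simp
    exact measure_mono_null hsub h0
  have haeg : ∀ᵐ ω' ∂μ', ((1/2) * A ^ ((Q ω' : ℝ) - (N : ℝ)/2)
        + (1/2) * A ^ ((N : ℝ)/2 - (Q ω' : ℝ))) ^ m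
      = ∑ q : Fin (N + 1),
          ({ω' | Q ω' = (q : ℕ)}).indicator (fun _ => g q) ω' := by
    filter_upwards [haeQ] with ω' hω'
    rw [Finset.sum_eq_single (⟨Q ω', by omega⟩ : Fin (N + 1))]
    · rw [Set.indicator_of_mem (by simp)]
    · intro q _ hq
      rw [Set.indicator_of_notMem]
      intro hmem
      simp only [Set.mem_setOf_eq] at hmem
      exact hq (by ext; simp [← hmem])
    · intro h; exact absurd (Finset.mem_univ _) h
  have hRHS : ∫ ω', ((1/2) * A ^ ((Q ω' : ℝ) - (N : ℝ)/2)
        + (1/2) * A ^ ((N : ℝ)/2 - (Q ω' : ℝ))) ^ m ∂μ'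
      = ∑ q ∈ Finset.range (N + 1), g q * ((N.choose q : ℝ) * ((1:ℝ)/2) ^ N) := by
    rw [integral_of_fibers μ' (fun q : Fin (N+1) => {ω' | Q ω' = (q : ℕ)})
      (fun q => hmQ (measurableSet_singleton _)) _ (fun q => g q) haeg]
    rw [← Fin.sum_univ_eq_sum_range (fun q => g q * ((N.choose q : ℝ) * ((1:ℝ)/2) ^ N))]
    refine Finset.sum_congr rfl fun q _ => ?_
    rw [hQ (q : ℕ), ENNReal.toReal_ofReal (by positivity)]
  rw [hLHS, hRHS]
  -- now pure algebra
  -- sum over ε for fixed δ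
  have hsum_eps : ∀ δ : Fin N → Bool,
      (∑ ε : Fin m → Bool, ∏ i, ∏ j, (1 + x * e (ε i) * e (δ j)))
        = ((1+x) ^ c δ * (1-x) ^ (N - c δ)
            + (1-x) ^ c δ * (1+x) ^ (N - c δ)) ^ m := by
    intro δ
    have h1 : (∏ j, (1 + x * e true * e (δ j)))
        = (1+x) ^ c δ * (1-x) ^ (N - c δ) := by
      rw [show (fun j => (1 + x * e true * e (δ j)))
          = fun j => (if δ j then (1+x) else (1-x)) by
        funext j; cases hb : δ j <;> simp [he] <;> ring]
      exact prod_bool_pow N δ _ _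
    have h2 : (∏ j, (1 + x * e false * e (δ j)))
        = (1-x) ^ c δ * (1+x) ^ (N - c δ) := by
      rw [show (fun j => (1 + x * e false * e (δ j)))
          = fun j => (if δ j then (1-x) else (1+x)) by
        funext j; cases hb : δ j <;> simp [he] <;> ring]
      exact prod_bool_pow N δ _ _
    rw [sum_pi_bool m (fun b => ∏ j, (1 + x * e b * e (δ j))), h1, h2]
  -- group LHS by δ and then by the count
  have hcle : ∀ δ : Fin N → Bool, c δ ∈ Finset.range (N + 1) := by
    intro δ
    refine Finset.mem_range.2 ?_
    have : c δ ≤ N := by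
      simpa using Finset.card_filter_le (Finset.univ : Finset (Fin N))
        (fun j => δ j = true)
    omega
  have hgroup : (∑ p : (Fin m → Bool) × (Fin N → Bool),
        (∏ i, ∏ j, (1 + x * e (p.1 i) * e (p.2 j))) * ((1:ℝ)/2) ^ (m + N))
      = ∑ q ∈ Finset.range (N + 1), (N.choose q : ℝ) *
          (((1+x) ^ q * (1-x) ^ (N - q) + (1-x) ^ q * (1+x) ^ (N - q)) ^ m
            * ((1:ℝ)/2) ^ (m + N)) := by
    rw [← Finset.sum_mul]
    calc (∑ p : (Fin m → Bool) × (Fin N → Bool),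
          ∏ i, ∏ j, (1 + x * e (p.1 i) * e (p.2 j))) * ((1:ℝ)/2) ^ (m + N)
        = (∑ δ : Fin N → Bool, ∑ ε : Fin m → Bool,
            ∏ i, ∏ j, (1 + x * e (ε i) * e (δ j))) * ((1:ℝ)/2) ^ (m + N) := by
          rw [Fintype.sum_prod_type_right]
      _ = (∑ δ : Fin N → Bool,
            ((1+x) ^ c δ * (1-x) ^ (N - c δ) + (1-x) ^ c δ * (1+x) ^ (N - c δ)) ^ m)
            * ((1:ℝ)/2) ^ (m + N) := by
          congr 1
          exact Finset.sum_congr rfl fun δ _ => hsum_eps δ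
      _ = (∑ q ∈ Finset.range (N + 1), ∑ δ ∈ Finset.univ.filter
            (fun δ : Fin N → Bool => c δ = q),
            ((1+x) ^ c δ * (1-x) ^ (N - c δ) + (1-x) ^ c δ * (1+x) ^ (N - c δ)) ^ m)
            * ((1:ℝ)/2) ^ (m + N) := by
          rw [Finset.sum_fiberwise_of_maps_to (fun δ _ => hcle δ)]
      _ = ∑ q ∈ Finset.range (N + 1), (N.choose q : ℝ) *
            (((1+x) ^ q * (1-x) ^ (N - q) + (1-x) ^ q * (1+x) ^ (N - q)) ^ m
              * ((1:ℝ)/2) ^ (m + N)) := by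
          rw [Finset.sum_mul]
          refine Finset.sum_congr rfl fun q hq => ?_
          have : (∑ δ ∈ Finset.univ.filter (fun δ : Fin N → Bool => c δ = q),
              ((1+x) ^ c δ * (1-x) ^ (N - c δ) + (1-x) ^ c δ * (1+x) ^ (N - c δ)) ^ m)
            = ∑ _δ ∈ Finset.univ.filter (fun δ : Fin N → Bool => c δ = q),
              ((1+x) ^ q * (1-x) ^ (N - q) + (1-x) ^ q * (1+x) ^ (N - q)) ^ m := by
            refine Finset.sum_congr rfl fun δ hδ => ?_
            rw [(Finset.mem_filter.1 hδ).2]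
          rw [this, Finset.sum_const, count_fiber N q, nsmul_eq_mul]
          ring
  rw [hgroup, Finset.mul_sum]
  refine Finset.sum_congr rfl fun q hq => ?_
  have hqN : q ≤ N := Nat.lt_succ_iff.1 (Finset.mem_range.1 hq)
  have k1 := rpow_key hx0 hx1 N q hqN
  have k2 := rpow_key' hx0 hx1 N q hqN
  have key : ((1:ℝ)/2) * ((1+x) ^ q * (1-x) ^ (N-q) + (1-x) ^ q * (1+x) ^ (N-q))
      = (1 - x ^ 2) ^ ((N:ℝ)/2)
        * ((1/2) * A ^ ((q:ℝ) - (N:ℝ)/2) + (1/2) * A ^ ((N:ℝ)/2 - (q:ℝ))) := by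
    rw [hA]
    linear_combination (-1/2 : ℝ) * k1 + (-1/2 : ℝ) * k2
  have hx2 : (0:ℝ) ≤ 1 - x ^ 2 := by nlinarith
  have hpow : ((1 - x ^ 2) ^ ((N:ℝ)/2)) ^ m = (1 - x ^ 2) ^ ((m * N : ℝ)/2) := by
    rw [← Real.rpow_natCast ((1 - x ^ 2) ^ ((N:ℝ)/2)) m, ← Real.rpow_mul hx2]
    congr 1
    push_cast
    ring
  have keym : ((1:ℝ)/2) ^ m * ((1+x) ^ q * (1-x) ^ (N-q) + (1-x) ^ q * (1+x) ^ (N-q)) ^ m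
      = (1 - x ^ 2) ^ ((m * N : ℝ)/2) * g q := by
    rw [← mul_pow, key, mul_pow, hpow, hg]
  rw [pow_add]
  linear_combination ((N.choose q : ℝ) * ((1:ℝ)/2) ^ N) * keym
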